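/- Let α be irrational with liminf_{n→∞} n·|e^{2πinα} - 1| = 0. Define f(x) = lx + Σ_n a_n e^{2πinx}, where l is a nonzero integer, a_{±n_k} = e^{2πi n_k α} - 1 for a sequence n_k with n_k|e^{2πi n_k α}-1| < 1/k², and a_n = 0 otherwise. Then there is no pair (φ, c) with φ : ℝ → ℝ continuous, periodic with period 1, and c ∈ ℝ, such that f(x) = φ(x+α) - φ(x) + lx + c for all x ∈ ℝ. -/

import Mathlib

open Complex Filter Topology intervalIntegral MeasureTheory

noncomputable def ee (t : ℤ) (x : ℝ) : ℂ := Complex.exp (2 * Real.pi * I * t * x)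

lemma ee_natCast (n : ℕ) (x : ℝ) :
    Complex.exp (2 * Real.pi * I * (n : ℕ) * x) = ee n x := by
  rw [ee]; norm_num

lemma contEE (t : ℤ) : Continuous (ee t) := by
  unfold ee; fun_prop

lemma absEE (t : ℤ) (x : ℝ) : ‖ee t x‖ = 1 := by
  rw [ee, show (2 * (Real.pi:ℂ) * I * t * x) = ((2 * Real.pi * t * x : ℝ):ℂ) * I by push_cast; ring]
  exact Complex.norm_exp_ofReal_mul_I _

lemma intExp (t : ℤ) : ∫ x in (0:ℝ)..1, ee t x = if t = 0 then 1 else 0 := by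
  unfold ee
  rcases eq_or_ne t 0 with h | h
  · simp [h]
  · have hc : (2 * Real.pi * I * t : ℂ) ≠ 0 := by
      simp [Real.pi_ne_zero, I_ne_zero, h]
    rw [if_neg h]
    have := integral_exp_mul_complex (a := 0) (b := 1) hc
    simp only [mul_assoc] at this ⊢
    rw [this]
    have h1 : cexp (2 * (Real.pi * (I * (t * (1:ℝ))))) = 1 := by
      rw [show (2 * (Real.pi * (I * (t * ((1:ℝ):ℂ)))) : ℂ) = t * (2 * Real.pi * I) by push_cast; ring]
      exact Complex.exp_int_mul_two_pi_mul_I t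
    rw [h1]
    simp

lemma ee_mul (s t : ℤ) (x : ℝ) : ee s x * ee t x = ee (s + t) x := by
  unfold ee; rw [← Complex.exp_add]; push_cast; ring_nf

lemma termInt (s t : ℤ) : ∫ x in (0:ℝ)..1, ee s x * ee t x = if s + t = 0 then 1 else 0 := by
  simp_rw [ee_mul]
  exact intExp (s + t)

lemma twoRe (w : ℂ) (n : ℤ) (x : ℝ) :
    ((2 * (w * ee n x).re : ℝ) : ℂ) = w * ee n x + (starRingEnd ℂ) w * ee (-n) x := by
  have h1 : ((2 * (w * ee n x).re : ℝ) : ℂ) = w * ee n x + (starRingEnd ℂ) (w * ee n x) := by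
    push_cast
    rw [Complex.add_conj]
    push_cast; ring
  have e2 : (starRingEnd ℂ) (ee n x) = ee (-n) x := by
    unfold ee
    rw [← Complex.exp_conj]
    congr 1
    simp only [map_mul, Complex.conj_I, Complex.conj_ofReal, map_ofNat, map_intCast]
    push_cast; ring
  rw [h1, map_mul, e2]

lemma sumInv : Summable (fun k : ℕ => 1/((k:ℝ)+1)^2) := by
  have h0 : Summable (fun n : ℕ => 1/(n:ℝ)^2) := Real.summable_one_div_nat_pow.mpr (by norm_num)
  have h1 := (summable_nat_add_iff 1).mpr h0
  exact h1.congr (fun k => by push_cast; ring)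

lemma keyLHS (a : ℕ → ℂ) (nk : ℕ → ℕ) (hmono : StrictMono nk) (hpos : ∀ k, 1 ≤ nk k)
    (habs : ∀ k, ‖a k‖ ≤ 1/((k:ℝ)+1)^2) (j : ℕ) :
    ∫ x in (0:ℝ)..1, (∑' k, ((2 * ((a k) * ee (nk k) x).re : ℝ) : ℂ) * ee (-(nk j:ℤ)) x) = a j := by
  have hFc : ∀ k, Continuous (fun x : ℝ =>
      ((2 * ((a k) * ee (nk k) x).re : ℝ) : ℂ) * ee (-(nk j:ℤ)) x) := by
    intro k
    have := contEE (nk k : ℤ)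
    have := contEE (-(nk j:ℤ))
    fun_prop
  have hb : ∀ k (x : ℝ), ‖((2 * ((a k) * ee (nk k) x).re : ℝ) : ℂ) * ee (-(nk j:ℤ)) x‖
      ≤ 2 * (1/((k:ℝ)+1)^2) := by
    intro k x
    rw [norm_mul]
    have h2 : ‖ee (-(nk j:ℤ)) x‖ = 1 := absEE _ x
    rw [h2, mul_one, Complex.norm_real, Real.norm_eq_abs, abs_mul]
    have h3 : |((a k) * ee (nk k) x).re| ≤ ‖a k‖ := by
      refine le_trans (Complex.abs_re_le_norm _) ?_
      rw [norm_mul, absEE, mul_one]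
    calc |(2:ℝ)| * |((a k) * ee (nk k) x).re|
        ≤ 2 * ‖a k‖ := by
          rw [show |(2:ℝ)| = 2 by norm_num]; gcongr
      _ ≤ 2 * (1/((k:ℝ)+1)^2) := by gcongr; exact habs k
  have hint : ∀ k, Integrable (fun x : ℝ =>
      ((2 * ((a k) * ee (nk k) x).re : ℝ) : ℂ) * ee (-(nk j:ℤ)) x)
      (MeasureTheory.volume.restrict (Set.Ioc (0:ℝ) 1)) :=
    fun k => (hFc k).integrableOn_Ioc
  have hnorm : Summable (fun k => ∫ x in Set.Ioc (0:ℝ) 1,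
      ‖((2 * ((a k) * ee (nk k) x).re : ℝ) : ℂ) * ee (-(nk j:ℤ)) x‖) := by
    refine Summable.of_nonneg_of_le
      (fun k => MeasureTheory.integral_nonneg (fun x => norm_nonneg _)) (fun k => ?_)
      (sumInv.mul_left 2)
    have h := MeasureTheory.norm_setIntegral_le_of_norm_le_const (μ := MeasureTheory.volume)
      (s := Set.Ioc (0:ℝ) 1)
      (f := fun x => ‖((2 * ((a k) * ee (nk k) x).re : ℝ) : ℂ) * ee (-(nk j:ℤ)) x‖)
      (by rw [Real.volume_Ioc]; norm_num)
      (fun x _ => by rw [norm_norm]; exact hb k x)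
    rw [Measure.real, Real.volume_Ioc] at h
    simp only [sub_zero, ENNReal.ofReal_one, ENNReal.toReal_one, mul_one] at h
    exact le_trans (le_abs_self _) (by simpa [Real.norm_eq_abs] using h)
  have hterm : ∀ k, (∫ x in Set.Ioc (0:ℝ) 1,
      ((2 * ((a k) * ee (nk k) x).re : ℝ) : ℂ) * ee (-(nk j:ℤ)) x) = if k = j then a j else 0 := by
    intro k
    rw [← intervalIntegral.integral_of_le zero_le_one]
    have hpt : ∀ x : ℝ, ((2 * ((a k) * ee (nk k) x).re : ℝ) : ℂ) * ee (-(nk j:ℤ)) x =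
        a k * (ee (nk k:ℤ) x * ee (-(nk j:ℤ)) x)
        + (starRingEnd ℂ) (a k) * (ee (-(nk k:ℤ)) x * ee (-(nk j:ℤ)) x) := by
      intro x
      rw [twoRe]; ring
    rw [intervalIntegral.integral_congr (fun x _ => hpt x)]
    rw [intervalIntegral.integral_add, intervalIntegral.integral_const_mul,
      intervalIntegral.integral_const_mul, termInt, termInt]
    · have hne : ¬ (-(nk k:ℤ) + -(nk j:ℤ) = 0) := by
        have h1 := hpos k; have h2 := hpos j
        omega
      rw [if_neg hne, mul_zero, add_zero]
      by_cases hkj : k = j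
      · subst hkj
        rw [if_pos (by omega), mul_one, if_pos rfl]
      · have : ¬ ((nk k:ℤ) + -(nk j:ℤ) = 0) := by
          intro h
          exact hkj (hmono.injective (by omega))
        rw [if_neg this, mul_zero, if_neg hkj]
    · exact (continuous_const.mul ((contEE _).mul (contEE _))).intervalIntegrable _ _
    · exact (continuous_const.mul ((contEE _).mul (contEE _))).intervalIntegrable _ _
  rw [intervalIntegral.integral_of_le zero_le_one]
  rw [← MeasureTheory.integral_tsum_of_summable_integral_norm hint hnorm]
  simp_rw [hterm]
  exact tsum_ite_eq j (fun _ => a j)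

lemma keyRHS (φ : ℝ → ℝ) (hφ : Continuous φ) (hper : ∀ x : ℝ, φ (x+1) = φ x) (c α : ℝ)
    (m : ℕ) (hm : 1 ≤ m) :
    ∫ x in (0:ℝ)..1, ((φ (x+α) - φ x + c : ℝ) : ℂ) * ee (-(m:ℤ)) x
    = (ee (m:ℤ) α - 1) * ∫ x in (0:ℝ)..1, ((φ x : ℝ) : ℂ) * ee (-(m:ℤ)) x := by
  have hconts : ∀ β : ℝ, Continuous (fun x : ℝ => ((φ (x+β) : ℝ) : ℂ) * ee (-(m:ℤ)) x) := by
    intro β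
    exact ((Complex.continuous_ofReal.comp (hφ.comp (continuous_id.add continuous_const))).mul
      (contEE _))
  have hcont0 : Continuous (fun x : ℝ => ((φ x : ℝ) : ℂ) * ee (-(m:ℤ)) x) :=
    (Complex.continuous_ofReal.comp hφ).mul (contEE _)
  have hsplit : ∀ x : ℝ, ((φ (x+α) - φ x + c : ℝ) : ℂ) * ee (-(m:ℤ)) x
      = (((φ (x+α) : ℝ) : ℂ) * ee (-(m:ℤ)) x - ((φ x : ℝ) : ℂ) * ee (-(m:ℤ)) x)
        + (c : ℂ) * ee (-(m:ℤ)) x := by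
    intro x; push_cast; ring
  rw [intervalIntegral.integral_congr (fun x _ => hsplit x)]
  rw [intervalIntegral.integral_add (f := fun x => ((φ (x+α) : ℝ) : ℂ) * ee (-(m:ℤ)) x - ((φ x : ℝ) : ℂ) * ee (-(m:ℤ)) x)
    (g := fun x => (c : ℂ) * ee (-(m:ℤ)) x) ((hconts α).sub hcont0 |>.intervalIntegrable _ _)
    ((continuous_const.mul (contEE _)).intervalIntegrable _ _)]
  rw [intervalIntegral.integral_sub ((hconts α).intervalIntegrable _ _)
    (hcont0.intervalIntegrable _ _)]
  rw [intervalIntegral.integral_const_mul, intExp, if_neg (by omega), mul_zero, add_zero]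
  -- now compute the shifted integral
  have hpt2 : ∀ x : ℝ, ((φ (x+α) : ℝ) : ℂ) * ee (-(m:ℤ)) x
      = ee (m:ℤ) α * (((φ (x+α) : ℝ) : ℂ) * ee (-(m:ℤ)) (x+α)) := by
    intro x
    have h : ee (m:ℤ) α * ee (-(m:ℤ)) (x+α) = ee (-(m:ℤ)) x := by
      unfold ee; rw [← Complex.exp_add]; congr 1; push_cast; ring
    rw [← h]; ring
  rw [intervalIntegral.integral_congr (fun x _ => hpt2 x), intervalIntegral.integral_const_mul]
  have hcomp : (∫ x in (0:ℝ)..1, ((φ (x+α) : ℝ) : ℂ) * ee (-(m:ℤ)) (x+α))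
      = ∫ y in (0+α)..(1+α), ((φ y : ℝ) : ℂ) * ee (-(m:ℤ)) y :=
    intervalIntegral.integral_comp_add_right (fun y => ((φ y : ℝ) : ℂ) * ee (-(m:ℤ)) y) α
  rw [hcomp]
  have hh : Function.Periodic (fun y : ℝ => ((φ y : ℝ) : ℂ) * ee (-(m:ℤ)) y) 1 := by
    intro y
    have heq : ee (-(m:ℤ)) (y+1) = ee (-(m:ℤ)) y := by
      unfold ee
      have harg : (2 * (Real.pi:ℂ) * I * (((-(m:ℤ)):ℤ):ℂ) * (((y+1):ℝ):ℂ))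
          = 2 * Real.pi * I * (((-(m:ℤ)):ℤ):ℂ) * ((y:ℝ):ℂ) + (-(m:ℤ)) * (2 * Real.pi * I) := by
        push_cast; ring
      rw [harg, Complex.exp_add]
      have h1 : cexp (-(((m:ℕ):ℤ):ℂ) * (2 * Real.pi * I)) = 1 :=
        Complex.exp_eq_one_iff.mpr ⟨-(m:ℤ), by push_cast; ring⟩
      rw [h1, mul_one]
    simp only [hper, heq]
  have hper2 := hh.intervalIntegral_add_eq α 0
  rw [show (0:ℝ)+α = α by ring, show (1:ℝ)+α = α+1 by ring, hper2, zero_add]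
  ring

open FourierTransform in
lemma keyRL (φ : ℝ → ℝ) (hφ : Continuous φ) (nk : ℕ → ℕ) (hmono : StrictMono nk) :
    Tendsto (fun j => ∫ x in (0:ℝ)..1, ((φ x : ℝ) : ℂ) * ee (-(nk j:ℤ)) x) atTop (𝓝 0) := by
  set ψ : ℝ → ℂ := Set.indicator (Set.Ioc (0:ℝ) 1) (fun x => ((φ x : ℝ) : ℂ)) with hψ
  have hRL := Real.tendsto_integral_exp_smul_cocompact ψ
  have h1 : Tendsto (fun j => ((nk j : ℕ) : ℝ)) atTop atTop :=
    tendsto_natCast_atTop_atTop.comp hmono.tendsto_atTop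
  have h2 : Tendsto (fun j => ((nk j : ℕ) : ℝ)) atTop (cocompact ℝ) :=
    h1.mono_right (by rw [cocompact_eq_atBot_atTop]; exact le_sup_right)
  have h3 := hRL.comp h2
  refine h3.congr (fun j => ?_)
  show (∫ v : ℝ, Real.fourierChar (-(v * ((nk j : ℕ) : ℝ))) • ψ v) = _
  have hstep1 : (∫ v : ℝ, Real.fourierChar (-(v * ((nk j : ℕ) : ℝ))) • ψ v)
      = ∫ v in Set.Ioc (0:ℝ) 1, Real.fourierChar (-(v * ((nk j : ℕ) : ℝ))) • ((φ v : ℝ) : ℂ) := by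
    rw [← MeasureTheory.integral_indicator measurableSet_Ioc]
    congr 1
    funext v
    by_cases h : v ∈ Set.Ioc (0:ℝ) 1
    · simp [hψ, Set.indicator_of_mem h]
    · simp [hψ, Set.indicator_of_notMem h]
  rw [hstep1]
  rw [← intervalIntegral.integral_of_le zero_le_one]
  refine intervalIntegral.integral_congr (fun v _ => ?_)
  rw [Circle.smul_def, Real.fourierChar_apply]
  unfold ee
  have harg : ((2 * Real.pi * (-(v * ((nk j:ℕ):ℝ))) : ℝ) : ℂ) * I
      = 2 * Real.pi * I * (((-(nk j:ℤ)):ℤ):ℂ) * ((v:ℝ):ℂ) := by push_cast; ring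
  rw [harg, smul_eq_mul]
  ring

theorem stmt12 (α : ℝ) (hα : Irrational α)
    (hliminf : Filter.liminf
      (fun n : ℕ => (n : ℝ) * ‖Complex.exp (2 * Real.pi * I * n * α) - 1‖)
      Filter.atTop = 0)
    (l : ℤ) (hl : l ≠ 0)
    (nk : ℕ → ℕ) (hmono : StrictMono nk) (hpos : ∀ k, 1 ≤ nk k)
    (hnk : ∀ k : ℕ, (nk k : ℝ) *
      ‖Complex.exp (2 * Real.pi * I * (nk k) * α) - 1‖ < 1 / ((k : ℝ) + 1) ^ 2)
    (f : ℝ → ℝ)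
    (hf : ∀ x : ℝ, f x = l * x + ∑' k : ℕ,
      (2 * ((Complex.exp (2 * Real.pi * I * (nk k) * α) - 1) *
        Complex.exp (2 * Real.pi * I * (nk k) * x)).re)) :
    ¬ ∃ (φ : ℝ → ℝ) (c : ℝ), Continuous φ ∧ (∀ x : ℝ, φ (x + 1) = φ x) ∧
      ∀ x : ℝ, f x = φ (x + α) - φ x + l * x + c := by
  rintro ⟨φ, c, hφ, hper, heq⟩
  simp only [ee_natCast] at hnk hf
  set a : ℕ → ℂ := fun k => ee (nk k : ℤ) α - 1 with ha
  have habs : ∀ k, ‖a k‖ ≤ 1/((k:ℝ)+1)^2 := by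
    intro k
    have h := (hnk k).le
    have h1 : (1:ℝ) ≤ (nk k : ℝ) := by exact_mod_cast hpos k
    have h2 : (0:ℝ) ≤ ‖a k‖ := norm_nonneg _
    calc ‖a k‖ = 1 * ‖a k‖ := (one_mul _).symm
      _ ≤ (nk k : ℝ) * ‖a k‖ := by gcongr
      _ ≤ 1/((k:ℝ)+1)^2 := h
  have hg : ∀ x : ℝ, (∑' k, 2 * ((a k) * ee (nk k : ℤ) x).re) = φ (x+α) - φ x + c := by
    intro x
    have h1 := hf x
    have h2 := heq x
    rw [h1] at h2
    linarith
  have hΦ1 : ∀ j : ℕ, (∫ x in (0:ℝ)..1, ((φ x : ℝ) : ℂ) * ee (-(nk j:ℤ)) x) = 1 := by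
    intro j
    have key1 := keyLHS a nk hmono hpos habs j
    have hpt : ∀ x : ℝ,
        (∑' k, ((2 * ((a k) * ee (nk k : ℤ) x).re : ℝ) : ℂ) * ee (-(nk j:ℤ)) x)
        = ((φ (x+α) - φ x + c : ℝ) : ℂ) * ee (-(nk j:ℤ)) x := by
      intro x
      rw [tsum_mul_right, ← Complex.ofReal_tsum, hg x]
    rw [intervalIntegral.integral_congr (fun x _ => hpt x)] at key1
    rw [keyRHS φ hφ hper c α (nk j) (hpos j)] at key1
    have hane : a j ≠ 0 := by
      intro h0
      have hexp : Complex.exp (2 * Real.pi * I * ((nk j : ℤ) : ℂ) * α) = 1 := by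
        have := sub_eq_zero.mp h0
        simpa [ee] using this
      obtain ⟨n, hn⟩ := Complex.exp_eq_one_iff.mp hexp
      have h2 : ((nk j : ℝ) * α : ℂ) = (n : ℂ) := by
        have hne : (2 * Real.pi * I : ℂ) ≠ 0 := by
          simp [Real.pi_ne_zero, I_ne_zero]
        apply mul_left_cancel₀ hne
        rw [show (2 * Real.pi * I : ℂ) * ((nk j : ℝ) * α : ℂ) =
          2 * Real.pi * I * ((nk j : ℤ) : ℂ) * α by push_cast; ring, hn]
        push_cast; ring
      have h3 : (nk j : ℝ) * α = (n : ℝ) := by exact_mod_cast h2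
      have hnk0 : (nk j : ℝ) ≠ 0 := Nat.cast_ne_zero.mpr (by have := hpos j; omega)
      have h4 : α = ((n : ℚ) / (nk j : ℚ) : ℚ) := by
        push_cast
        rw [eq_div_iff hnk0, mul_comm]
        exact h3
      exact hα ⟨_, h4.symm⟩
    have h5 : a j * (∫ x in (0:ℝ)..1, ((φ x : ℝ) : ℂ) * ee (-(nk j:ℤ)) x) = a j * 1 := by
      rw [mul_one]; exact key1
    exact mul_left_cancel₀ hane h5
  have hRL := keyRL φ hφ nk hmono
  have h0 : Tendsto (fun _ : ℕ => (1:ℂ)) atTop (𝓝 0) := hRL.congr hΦ1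
  exact one_ne_zero (tendsto_nhds_unique tendsto_const_nhds h0)
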